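/- (Karamata's Tauberian theorem) Let μ be a measure on [0, ∞) such that the Laplace transform L(t) = ∫ e^{-tλ} dμ(λ) is finite for every t > 0. Let r > 0 and C ≥ 0 and suppose t^r · L(t) → C as t → 0⁺. Then μ([0, x]) / x^r → C / Γ(r + 1) as x → ∞, where Γ is the Gamma function. -/

import Mathlib

open Filter MeasureTheory Real Set

set_option maxHeartbeats 1000000

noncomputable def KTramp (lo w : ℝ) : ℝ → ℝ := fun u => max 0 (min 1 ((u - lo)/w))

lemma KTramp_nonneg (lo w u : ℝ) : 0 ≤ KTramp lo w u := le_max_left _ _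
lemma KTramp_le_one (lo w u : ℝ) : KTramp lo w u ≤ 1 :=
  max_le zero_le_one (min_le_left _ _)
lemma KTramp_continuous (lo w : ℝ) : Continuous (KTramp lo w) := by
  unfold KTramp; fun_prop
lemma KTramp_eq_zero {lo w u : ℝ} (hw : 0 < w) (h : u ≤ lo) : KTramp lo w u = 0 := by
  unfold KTramp
  have : (u - lo)/w ≤ 0 := div_nonpos_of_nonpos_of_nonneg (by linarith) hw.le
  rw [max_eq_left]
  exact le_trans (min_le_right _ _) this
lemma KTramp_eq_one {lo w u : ℝ} (hw : 0 < w) (h : lo + w ≤ u) : KTramp lo w u = 1 := by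
  unfold KTramp
  have : (1:ℝ) ≤ (u - lo)/w := (one_le_div hw).2 (by linarith)
  rw [min_eq_left this, max_eq_right zero_le_one]

lemma KT_exp_pow (k : ℕ) (s : ℝ) :
    Real.exp (-s) * (Real.exp (-s))^k = Real.exp (-(((k:ℝ)+1) * s)) := by
  rw [← Real.exp_nat_mul, ← Real.exp_add]; ring_nf

lemma KT_ae_nonneg {μ : Measure ℝ} (hsupp : μ (Set.Iio 0) = 0) : ∀ᵐ x ∂μ, 0 ≤ x := by
  rw [ae_iff]
  simp only [not_le]
  exact hsupp

lemma KT_integrable_comp (μ : Measure ℝ) (hsupp : μ (Set.Iio 0) = 0)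
    (hint : ∀ t : ℝ, 0 < t → Integrable (fun x => Real.exp (-(t * x))) μ)
    {h : ℝ → ℝ} (hh : Continuous h) {M : ℝ} (hM : ∀ u ∈ Set.Icc (0:ℝ) 1, |h u| ≤ M)
    {t : ℝ} (ht : 0 < t) :
    Integrable (fun x => Real.exp (-(t*x)) * h (Real.exp (-(t*x)))) μ := by
  refine Integrable.mono ((hint t ht).const_mul M)
    (Continuous.aestronglyMeasurable (by fun_prop)) ?_
  filter_upwards [KT_ae_nonneg hsupp] with x hx
  have h1 : Real.exp (-(t*x)) ∈ Set.Icc (0:ℝ) 1 :=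
    ⟨(Real.exp_pos _).le, Real.exp_le_one_iff.2 (by nlinarith)⟩
  have h2 : |h (Real.exp (-(t*x)))| ≤ M := hM _ h1
  have h3 : (0:ℝ) ≤ M := le_trans (abs_nonneg _) h2
  simp only [Real.norm_eq_abs, abs_mul, Real.abs_exp, abs_of_nonneg h3]
  calc Real.exp (-(t*x)) * |h (Real.exp (-(t*x)))| ≤ Real.exp (-(t*x)) * M :=
        mul_le_mul_of_nonneg_left h2 (Real.exp_pos _).le
    _ = M * Real.exp (-(t*x)) := mul_comm _ _

lemma KT_integrableOn_gamma {r : ℝ} (hr : 0 < r) {h : ℝ → ℝ} (hh : Continuous h)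
    {M : ℝ} (hM : ∀ u ∈ Set.Icc (0:ℝ) 1, |h u| ≤ M) :
    IntegrableOn (fun y => y ^ (r-1) * (Real.exp (-y) * h (Real.exp (-y)))) (Set.Ioi 0) := by
  have hg : IntegrableOn (fun y => M * (Real.exp (-y) * y ^ (r-1))) (Set.Ioi 0) :=
    (Real.GammaIntegral_convergent hr).const_mul M
  refine Integrable.mono hg ?_ ?_
  · refine ContinuousOn.aestronglyMeasurable ?_ measurableSet_Ioi
    exact ((continuousOn_id.rpow_const (fun y hy => Or.inl (ne_of_gt hy)))).mul
      (Continuous.continuousOn (by fun_prop))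
  · rw [ae_restrict_iff' measurableSet_Ioi]
    refine ae_of_all _ (fun y hy => ?_)
    have hy0 : (0:ℝ) < y := hy
    have h1 : Real.exp (-y) ∈ Set.Icc (0:ℝ) 1 :=
      ⟨(Real.exp_pos _).le, Real.exp_le_one_iff.2 (by linarith)⟩
    have h2 : |h (Real.exp (-y))| ≤ M := hM _ h1
    have h3 : (0:ℝ) ≤ M := le_trans (abs_nonneg _) h2
    have h4 : (0:ℝ) ≤ y ^ (r-1) := Real.rpow_nonneg hy0.le _
    simp only [Real.norm_eq_abs, abs_mul, Real.abs_exp, abs_of_nonneg h4, abs_of_nonneg h3]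
    calc y ^ (r-1) * (Real.exp (-y) * |h (Real.exp (-y))|)
        ≤ y ^ (r-1) * (Real.exp (-y) * M) := by
          apply mul_le_mul_of_nonneg_left _ h4
          exact mul_le_mul_of_nonneg_left h2 (Real.exp_pos _).le
      _ = M * (Real.exp (-y) * y ^ (r-1)) := by ring

lemma KT_tendsto_scaled (μ : Measure ℝ) {r C : ℝ} (hr : 0 < r)
    (hlim : Tendsto (fun t : ℝ => t ^ r * ∫ x, Real.exp (-(t * x)) ∂μ)
      (nhdsWithin 0 (Set.Ioi 0)) (nhds C)) {c : ℝ} (hc : 0 < c) :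
    Tendsto (fun t : ℝ => t ^ r * ∫ x, Real.exp (-((c*t) * x)) ∂μ)
      (nhdsWithin 0 (Set.Ioi 0)) (nhds ((1/c)^r * C)) := by
  have h1 : Tendsto (fun t : ℝ => c*t) (nhdsWithin 0 (Set.Ioi 0)) (nhdsWithin 0 (Set.Ioi 0)) := by
    refine tendsto_nhdsWithin_of_tendsto_nhds_of_eventually_within _ ?_ ?_
    · have h0 : Continuous (fun t : ℝ => c*t) := continuous_const.mul continuous_id
      simpa using (h0.tendsto 0).mono_left nhdsWithin_le_nhds
    · exact eventually_nhdsWithin_of_forall (fun t ht => mul_pos hc ht)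
  have h2 := (hlim.comp h1).const_mul ((1/c)^r)
  refine h2.congr' ?_
  filter_upwards [self_mem_nhdsWithin] with t (ht : 0 < t)
  show (1/c)^r * ((c*t) ^ r * _) = _
  rw [Real.mul_rpow hc.le ht.le, ← mul_assoc, ← mul_assoc,
    ← Real.mul_rpow (by positivity) hc.le, one_div_mul_cancel hc.ne', Real.one_rpow, one_mul]

lemma KT_tendsto_poly (μ : Measure ℝ) (hsupp : μ (Set.Iio 0) = 0)
    (hint : ∀ t : ℝ, 0 < t → Integrable (fun x => Real.exp (-(t * x))) μ)
    {r C : ℝ} (hr : 0 < r)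
    (hlim : Tendsto (fun t : ℝ => t ^ r * ∫ x, Real.exp (-(t * x)) ∂μ)
      (nhdsWithin 0 (Set.Ioi 0)) (nhds C)) (p : Polynomial ℝ) :
    Tendsto (fun t : ℝ => t ^ r * ∫ x, Real.exp (-(t*x)) * p.eval (Real.exp (-(t*x))) ∂μ)
      (nhdsWithin 0 (Set.Ioi 0))
      (nhds ((C / Real.Gamma r) *
        ∫ y in Set.Ioi 0, y^(r-1) * (Real.exp (-y) * p.eval (Real.exp (-y))))) := by
  set n := p.natDegree + 1 with hn
  -- μ-side rewrite
  have hμside : ∀ t : ℝ, 0 < t →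
      (∫ x, Real.exp (-(t*x)) * p.eval (Real.exp (-(t*x))) ∂μ)
      = ∑ k ∈ Finset.range n, p.coeff k * ∫ x, Real.exp (-((((k:ℝ)+1)*t) * x)) ∂μ := by
    intro t ht
    have hfun : (fun x : ℝ => Real.exp (-(t*x)) * p.eval (Real.exp (-(t*x))))
        = fun x => ∑ k ∈ Finset.range n, p.coeff k * Real.exp (-((((k:ℝ)+1)*t) * x)) := by
      funext x
      rw [Polynomial.eval_eq_sum_range, Finset.mul_sum]
      refine Finset.sum_congr rfl fun k _ => ?_
      calc Real.exp (-(t*x)) * (p.coeff k * (Real.exp (-(t*x)))^k)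
          = p.coeff k * (Real.exp (-(t*x)) * (Real.exp (-(t*x)))^k) := by ring
        _ = p.coeff k * Real.exp (-((((k:ℝ)+1)*t) * x)) := by
            rw [KT_exp_pow k (t*x)]; ring_nf
    rw [hfun, integral_finset_sum]
    · exact Finset.sum_congr rfl fun k _ => integral_const_mul _ _
    · exact fun k _ => ((hint _ (by positivity)).const_mul _)
  -- Gamma-side rewrite
  have hγside : (∫ y in Set.Ioi 0, y^(r-1) * (Real.exp (-y) * p.eval (Real.exp (-y))))
      = ∑ k ∈ Finset.range n, p.coeff k * ((1/((k:ℝ)+1))^r * Real.Gamma r) := by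
    have hfun : ∀ y : ℝ, y^(r-1) * (Real.exp (-y) * p.eval (Real.exp (-y)))
        = ∑ k ∈ Finset.range n, p.coeff k * (y^(r-1) * Real.exp (-((((k:ℝ)+1)) * y))) := by
      intro y
      rw [Polynomial.eval_eq_sum_range, Finset.mul_sum, Finset.mul_sum]
      refine Finset.sum_congr rfl fun k _ => ?_
      rw [← KT_exp_pow k y]; ring
    rw [show (fun y : ℝ => y^(r-1) * (Real.exp (-y) * p.eval (Real.exp (-y))))
        = fun y => ∑ k ∈ Finset.range n, p.coeff k * (y^(r-1) * Real.exp (-((((k:ℝ)+1)) * y)))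
      from funext hfun]
    rw [integral_finset_sum]
    · refine Finset.sum_congr rfl fun k _ => ?_
      rw [integral_const_mul, Real.integral_rpow_mul_exp_neg_mul_Ioi hr (by positivity)]
    · intro k _
      have hmon : IntegrableOn (fun y : ℝ => y^(r-1) * (Real.exp (-y) * (Real.exp (-y))^k))
          (Set.Ioi 0) :=
        KT_integrableOn_gamma hr (continuous_pow k) (M := 1) (fun u hu => by
          show |u ^ k| ≤ 1
          rw [abs_pow, abs_of_nonneg hu.1]
          exact pow_le_one₀ hu.1 hu.2)
      exact (hmon.congr_fun (fun y hy => by rw [KT_exp_pow k y])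
        measurableSet_Ioi).const_mul _
  -- combine
  rw [hγside, Finset.mul_sum]
  have hG : Real.Gamma r ≠ 0 := (Real.Gamma_pos_of_pos hr).ne'
  have hlim2 : Tendsto
      (fun t : ℝ => ∑ k ∈ Finset.range n,
        p.coeff k * (t ^ r * ∫ x, Real.exp (-((((k:ℝ)+1)*t) * x)) ∂μ))
      (nhdsWithin 0 (Set.Ioi 0))
      (nhds (∑ k ∈ Finset.range n, p.coeff k * ((1/((k:ℝ)+1))^r * C))) := by
    refine tendsto_finset_sum _ fun k _ => ?_
    exact (KT_tendsto_scaled μ hr hlim (by positivity)).const_mul _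
  have hsum_eq : (∑ i ∈ Finset.range n,
      C / Real.Gamma r * (p.coeff i * ((1/((i:ℝ)+1))^r * Real.Gamma r)))
      = ∑ k ∈ Finset.range n, p.coeff k * ((1/((k:ℝ)+1))^r * C) :=
    Finset.sum_congr rfl fun k _ => by field_simp
  rw [hsum_eq]
  refine hlim2.congr' ?_
  filter_upwards [self_mem_nhdsWithin] with t (ht : 0 < t)
  rw [hμside t ht, Finset.mul_sum]
  exact Finset.sum_congr rfl fun k _ => by ring

lemma KT_tendsto_cont (μ : Measure ℝ) (hsupp : μ (Set.Iio 0) = 0)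
    (hint : ∀ t : ℝ, 0 < t → Integrable (fun x => Real.exp (-(t * x))) μ)
    {r C : ℝ} (hr : 0 < r) (hC : 0 ≤ C)
    (hlim : Tendsto (fun t : ℝ => t ^ r * ∫ x, Real.exp (-(t * x)) ∂μ)
      (nhdsWithin 0 (Set.Ioi 0)) (nhds C)) {h : ℝ → ℝ} (hh : Continuous h) :
    Tendsto (fun t : ℝ => t ^ r * ∫ x, Real.exp (-(t*x)) * h (Real.exp (-(t*x))) ∂μ)
      (nhdsWithin 0 (Set.Ioi 0))
      (nhds ((C / Real.Gamma r) *
        ∫ y in Set.Ioi 0, y^(r-1) * (Real.exp (-y) * h (Real.exp (-y))))) := by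
  have hG : (0:ℝ) < Real.Gamma r := Real.Gamma_pos_of_pos hr
  obtain ⟨Mh, hMh⟩ := (isCompact_Icc : IsCompact (Set.Icc (0:ℝ) 1)).exists_bound_of_continuousOn
    hh.continuousOn
  rw [Metric.tendsto_nhds]
  intro ε hε
  have hC1 : (0:ℝ) < 3 * (C + 1) := by nlinarith
  set δ := ε / (3 * (C + 1)) with hδdef
  have hδ : 0 < δ := div_pos hε hC1
  obtain ⟨p, hp⟩ := exists_polynomial_near_of_continuousOn 0 1 h hh.continuousOn δ hδ
  obtain ⟨Mp, hMp⟩ := (isCompact_Icc : IsCompact (Set.Icc (0:ℝ) 1)).exists_bound_of_continuousOn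
    (p.continuous.continuousOn)
  have hpoly := KT_tendsto_poly μ hsupp hint hr hlim p
  rw [Metric.tendsto_nhds] at hpoly
  -- Gamma-side distances
  have hIh := KT_integrableOn_gamma hr hh (fun u hu => hMh u hu)
  have hIp := KT_integrableOn_gamma hr p.continuous
    (fun u hu => hMp u hu)
  have hclaim2 : |((C / Real.Gamma r) *
        ∫ y in Set.Ioi 0, y^(r-1) * (Real.exp (-y) * p.eval (Real.exp (-y))))
      - ((C / Real.Gamma r) *
        ∫ y in Set.Ioi 0, y^(r-1) * (Real.exp (-y) * h (Real.exp (-y))))| ≤ δ * C := by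
    rw [← mul_sub, ← integral_sub hIp hIh, abs_mul,
      abs_of_nonneg (by positivity : (0:ℝ) ≤ C / Real.Gamma r)]
    have hb : ‖∫ y in Set.Ioi 0, (y^(r-1) * (Real.exp (-y) * p.eval (Real.exp (-y)))
        - y^(r-1) * (Real.exp (-y) * h (Real.exp (-y))))‖
        ≤ ∫ y in Set.Ioi 0, δ * (Real.exp (-y) * y^(r-1)) := by
      refine norm_integral_le_of_norm_le ((Real.GammaIntegral_convergent hr).const_mul δ) ?_
      rw [ae_restrict_iff' measurableSet_Ioi]
      refine ae_of_all _ (fun y hy => ?_)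
      have hy0 : (0:ℝ) < y := hy
      have h1 : Real.exp (-y) ∈ Set.Icc (0:ℝ) 1 :=
        ⟨(Real.exp_pos _).le, Real.exp_le_one_iff.2 (by linarith)⟩
      have h2 : |p.eval (Real.exp (-y)) - h (Real.exp (-y))| ≤ δ := (hp _ h1).le
      have h4 : (0:ℝ) ≤ y ^ (r-1) := Real.rpow_nonneg hy0.le _
      calc ‖y^(r-1) * (Real.exp (-y) * p.eval (Real.exp (-y)))
            - y^(r-1) * (Real.exp (-y) * h (Real.exp (-y)))‖
          = y^(r-1) * Real.exp (-y) *
              |p.eval (Real.exp (-y)) - h (Real.exp (-y))| := by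
            rw [Real.norm_eq_abs, show y^(r-1) * (Real.exp (-y) * p.eval (Real.exp (-y)))
              - y^(r-1) * (Real.exp (-y) * h (Real.exp (-y)))
              = (y^(r-1) * Real.exp (-y)) * (p.eval (Real.exp (-y)) - h (Real.exp (-y)))
              from by ring, abs_mul, abs_of_nonneg (by positivity)]
        _ ≤ y^(r-1) * Real.exp (-y) * δ := by
            exact mul_le_mul_of_nonneg_left h2 (by positivity)
        _ = δ * (Real.exp (-y) * y^(r-1)) := by ring
    calc C / Real.Gamma r * ‖∫ y in Set.Ioi 0,
          (y^(r-1) * (Real.exp (-y) * p.eval (Real.exp (-y)))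
            - y^(r-1) * (Real.exp (-y) * h (Real.exp (-y))))‖
        ≤ C / Real.Gamma r * ∫ y in Set.Ioi 0, δ * (Real.exp (-y) * y^(r-1)) :=
          mul_le_mul_of_nonneg_left hb (by positivity)
      _ = C / Real.Gamma r * (δ * Real.Gamma r) := by
          rw [MeasureTheory.integral_const_mul, ← Real.Gamma_eq_integral hr]
      _ = δ * C := by field_simp
  -- main eventually argument
  filter_upwards [self_mem_nhdsWithin,
    hlim.eventually (tendsto_id.eventually_lt_const (lt_add_one C)),
    hpoly (ε/3) (by positivity)] with t ht hLt hp3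
  have ht0 : (0:ℝ) < t := ht
  have Iht := KT_integrable_comp μ hsupp hint hh (fun u hu => hMh u hu) ht0
  have Ipt := KT_integrable_comp μ hsupp hint p.continuous (fun u hu => hMp u hu) ht0
  have hclaim1 : |(t ^ r * ∫ x, Real.exp (-(t*x)) * h (Real.exp (-(t*x))) ∂μ)
      - (t ^ r * ∫ x, Real.exp (-(t*x)) * p.eval (Real.exp (-(t*x))) ∂μ)|
      ≤ δ * (t ^ r * ∫ x, Real.exp (-(t*x)) ∂μ) := by
    rw [← mul_sub, ← integral_sub Iht Ipt, abs_mul,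
      abs_of_nonneg (Real.rpow_nonneg ht0.le r)]
    have hb : ‖∫ x, (Real.exp (-(t*x)) * h (Real.exp (-(t*x)))
        - Real.exp (-(t*x)) * p.eval (Real.exp (-(t*x)))) ∂μ‖
        ≤ ∫ x, δ * Real.exp (-(t*x)) ∂μ := by
      refine norm_integral_le_of_norm_le ((hint t ht0).const_mul δ) ?_
      filter_upwards [KT_ae_nonneg hsupp] with x hx
      have h1 : Real.exp (-(t*x)) ∈ Set.Icc (0:ℝ) 1 :=
        ⟨(Real.exp_pos _).le, Real.exp_le_one_iff.2 (by nlinarith)⟩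
      have h2 : |h (Real.exp (-(t*x))) - p.eval (Real.exp (-(t*x)))| ≤ δ := by
        rw [abs_sub_comm]; exact (hp _ h1).le
      calc ‖Real.exp (-(t*x)) * h (Real.exp (-(t*x)))
            - Real.exp (-(t*x)) * p.eval (Real.exp (-(t*x)))‖
          = Real.exp (-(t*x)) * |h (Real.exp (-(t*x))) - p.eval (Real.exp (-(t*x)))| := by
            rw [Real.norm_eq_abs, ← mul_sub, abs_mul, Real.abs_exp]
        _ ≤ Real.exp (-(t*x)) * δ := mul_le_mul_of_nonneg_left h2 (Real.exp_pos _).le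
        _ = δ * Real.exp (-(t*x)) := mul_comm _ _
    calc t ^ r * ‖∫ x, (Real.exp (-(t*x)) * h (Real.exp (-(t*x)))
          - Real.exp (-(t*x)) * p.eval (Real.exp (-(t*x)))) ∂μ‖
        ≤ t ^ r * ∫ x, δ * Real.exp (-(t*x)) ∂μ :=
          mul_le_mul_of_nonneg_left hb (Real.rpow_nonneg ht0.le r)
      _ = δ * (t ^ r * ∫ x, Real.exp (-(t*x)) ∂μ) := by
          rw [MeasureTheory.integral_const_mul]; ring
  have h13 : δ * (C + 1) = ε / 3 := by
    rw [hδdef]; field_simp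
  have hd1 : dist (t ^ r * ∫ x, Real.exp (-(t*x)) * h (Real.exp (-(t*x))) ∂μ)
      (t ^ r * ∫ x, Real.exp (-(t*x)) * p.eval (Real.exp (-(t*x))) ∂μ) < ε / 3 := by
    rw [Real.dist_eq]
    calc _ ≤ δ * (t ^ r * ∫ x, Real.exp (-(t*x)) ∂μ) := hclaim1
      _ < δ * (C + 1) := mul_lt_mul_of_pos_left hLt hδ
      _ = ε / 3 := h13
  have hd3 : dist ((C / Real.Gamma r) *
        ∫ y in Set.Ioi 0, y^(r-1) * (Real.exp (-y) * p.eval (Real.exp (-y))))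
      ((C / Real.Gamma r) *
        ∫ y in Set.Ioi 0, y^(r-1) * (Real.exp (-y) * h (Real.exp (-y)))) ≤ ε / 3 := by
    rw [Real.dist_eq]
    calc _ ≤ δ * C := hclaim2
      _ ≤ δ * (C + 1) := mul_le_mul_of_nonneg_left (by linarith) hδ.le
      _ = ε / 3 := h13
  refine lt_of_le_of_lt (dist_triangle4 _
    (t ^ r * ∫ x, Real.exp (-(t*x)) * p.eval (Real.exp (-(t*x))) ∂μ)
    ((C / Real.Gamma r) *
      ∫ y in Set.Ioi 0, y^(r-1) * (Real.exp (-y) * p.eval (Real.exp (-y)))) _) ?_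
  linarith

lemma KT_div_max {lo w : ℝ} (hw : 0 < w) {u : ℝ} (hu : 0 < u) :
    u * (KTramp lo w u / max u lo) = KTramp lo w u := by
  rcases le_or_gt lo u with h|h
  · rw [max_eq_left h]; field_simp
  · rw [KTramp_eq_zero hw h.le]; simp

lemma KT_restrict_Ioc {Y : ℝ} :
    (volume.restrict (Set.Ioi (0:ℝ))).restrict (Set.Ioc 0 Y) = volume.restrict (Set.Ioc 0 Y) := by
  rw [Measure.restrict_restrict measurableSet_Ioc,
    Set.inter_eq_left.2 Set.Ioc_subset_Ioi_self]

lemma KT_intOn_rpow {r : ℝ} (hr : 0 < r) {Y : ℝ} :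
    IntegrableOn (fun y : ℝ => y^(r-1)) (Set.Ioc 0 Y) :=
  (intervalIntegral.intervalIntegrable_rpow' (by linarith)).1

lemma KT_rpow_int {r : ℝ} (hr : 0 < r) {Y : ℝ} (hY : 0 ≤ Y) :
    (∫ y in Set.Ioi (0:ℝ), (Set.Ioc 0 Y).indicator (fun y => y^(r-1)) y) = Y^r / r := by
  rw [integral_indicator measurableSet_Ioc]
  show (∫ y, y^(r-1) ∂((volume.restrict (Set.Ioi (0:ℝ))).restrict (Set.Ioc 0 Y))) = _
  rw [KT_restrict_Ioc]
  rw [show (∫ y in Set.Ioc (0:ℝ) Y, y^(r-1)) = ∫ y in (0:ℝ)..Y, y^(r-1) from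
    (intervalIntegral.integral_of_le hY).symm]
  rw [integral_rpow (Or.inl (by linarith))]
  rw [sub_add_cancel, Real.zero_rpow hr.ne', sub_zero]

lemma KT_hcont {b w : ℝ} (hb : 0 < b) :
    Continuous (fun u : ℝ => KTramp b w u / max u b) :=
  (KTramp_continuous _ _).div (continuous_id.max continuous_const)
    (fun u => ne_of_gt (lt_max_of_lt_right hb))

lemma KT_hbound {b w : ℝ} (hb : 0 < b) :
    ∀ u ∈ Set.Icc (0:ℝ) 1, |KTramp b w u / max u b| ≤ 1/b := by
  intro u _
  have h1 : (0:ℝ) < max u b := lt_max_of_lt_right hb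
  rw [abs_of_nonneg (div_nonneg (KTramp_nonneg _ _ _) h1.le)]
  exact div_le_div₀ zero_le_one (KTramp_le_one _ _ _) hb (le_max_right _ _)

lemma KT_gamma_upper {r : ℝ} (hr : 0 < r) {b : ℝ} (hb0 : 0 < b) (hb1 : b < 1)
    {w : ℝ} (hw : 0 < w) :
    (∫ y in Set.Ioi (0:ℝ),
        y^(r-1) * (Real.exp (-y) * (KTramp b w (Real.exp (-y)) / max (Real.exp (-y)) b)))
      ≤ (-Real.log b)^r / r := by
  have hY : 0 ≤ -Real.log b := by
    have := Real.log_neg hb0 hb1; linarith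
  rw [← KT_rpow_int hr hY]
  refine integral_mono_ae (KT_integrableOn_gamma (h := fun u => KTramp b w u / max u b) hr (KT_hcont hb0) (KT_hbound hb0)) ?_ ?_
  · rw [integrable_indicator_iff measurableSet_Ioc]
    exact (KT_intOn_rpow hr).mono_measure Measure.restrict_le_self
  · refine (ae_restrict_iff' measurableSet_Ioi).2 (ae_of_all _ (fun y hy => ?_))
    have hy0 : (0:ℝ) < y := hy
    have h4 : (0:ℝ) ≤ y ^ (r-1) := Real.rpow_nonneg hy0.le _
    simp only
    rw [KT_div_max hw (Real.exp_pos _)]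
    rcases le_or_gt y (-Real.log b) with h|h
    · rw [Set.indicator_of_mem (Set.mem_Ioc.2 ⟨hy0, h⟩)]
      exact mul_le_of_le_one_right h4 (KTramp_le_one _ _ _)
    · rw [Set.indicator_of_notMem (fun hmem => absurd (Set.mem_Ioc.1 hmem).2 (not_le.2 h))]
      have he : Real.exp (-y) ≤ b := by
        rw [show b = Real.exp (Real.log b) from (Real.exp_log hb0).symm]
        exact Real.exp_le_exp.2 (by linarith)
      rw [KTramp_eq_zero hw he, mul_zero]

lemma KT_gamma_lower {r : ℝ} (hr : 0 < r) {b w : ℝ} (hb0 : 0 < b) (hw : 0 < w)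
    (hb1 : b + w < 1) :
    (-Real.log (b + w))^r / r ≤
    ∫ y in Set.Ioi (0:ℝ),
        y^(r-1) * (Real.exp (-y) * (KTramp b w (Real.exp (-y)) / max (Real.exp (-y)) b)) := by
  have hbw : (0:ℝ) < b + w := by linarith
  have hY : 0 ≤ -Real.log (b + w) := by
    have := Real.log_neg hbw hb1; linarith
  rw [← KT_rpow_int hr hY]
  refine integral_mono_ae ?_ (KT_integrableOn_gamma (h := fun u => KTramp b w u / max u b) hr (KT_hcont hb0) (KT_hbound hb0)) ?_
  · rw [integrable_indicator_iff measurableSet_Ioc]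
    exact (KT_intOn_rpow hr).mono_measure Measure.restrict_le_self
  · refine (ae_restrict_iff' measurableSet_Ioi).2 (ae_of_all _ (fun y hy => ?_))
    have hy0 : (0:ℝ) < y := hy
    have h4 : (0:ℝ) ≤ y ^ (r-1) := Real.rpow_nonneg hy0.le _
    simp only
    rw [KT_div_max hw (Real.exp_pos _)]
    rcases le_or_gt y (-Real.log (b + w)) with h|h
    · rw [Set.indicator_of_mem (Set.mem_Ioc.2 ⟨hy0, h⟩)]
      have he : b + w ≤ Real.exp (-y) := by
        rw [show b + w = Real.exp (Real.log (b + w)) from (Real.exp_log hbw).symm]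
        exact Real.exp_le_exp.2 (by linarith)
      rw [KTramp_eq_one hw he, mul_one]
    · rw [Set.indicator_of_notMem (fun hmem => absurd (Set.mem_Ioc.1 hmem).2 (not_le.2 h))]
      exact mul_nonneg h4 (KTramp_nonneg _ _ _)

lemma KT_finite (μ : Measure ℝ)
    (hint : ∀ t : ℝ, 0 < t → Integrable (fun x => Real.exp (-(t * x))) μ)
    (X : ℝ) : μ (Set.Icc 0 X) < ⊤ := by
  refine lt_of_le_of_lt (measure_mono (fun x hx => ?_))
    ((hint 1 one_pos).measure_ge_lt_top (Real.exp_pos (-X)))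
  show Real.exp (-X) ≤ Real.exp (-(1*x))
  exact Real.exp_le_exp.2 (by rw [one_mul]; linarith [hx.2])

/-- **Karamata's Tauberian theorem.** If the Laplace transform `L(t)` of a measure `μ`
on `[0,∞)` is finite for all `t > 0` and `t^r · L(t) → C` as `t → 0⁺`, then
`μ([0,x]) / x^r → C / Γ(r+1)` as `x → ∞`. -/
theorem karamata_tauberian
    (μ : Measure ℝ) (hsupp : μ (Set.Iio 0) = 0)
    (hint : ∀ t : ℝ, 0 < t → Integrable (fun x => Real.exp (-(t * x))) μ)
    (r C : ℝ) (hr : 0 < r) (hC : 0 ≤ C)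
    (hlim : Tendsto (fun t : ℝ => t ^ r * ∫ x, Real.exp (-(t * x)) ∂μ)
      (nhdsWithin 0 (Set.Ioi 0)) (nhds C)) :
    Tendsto (fun x : ℝ => (μ (Set.Icc 0 x)).toReal / x ^ r) atTop
      (nhds (C / Real.Gamma (r + 1))) := by
  have ha0 : (0:ℝ) < Real.exp (-1) := Real.exp_pos _
  have ha1 : Real.exp (-1) < 1 := Real.exp_lt_one_iff.2 (by norm_num)
  set a : ℝ := Real.exp (-1) with hadef
  have hloga : Real.log a = -1 := Real.log_exp _
  set T : ℝ := C / Real.Gamma (r+1) with hTdef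
  have hΓ : Real.Gamma (r+1) = r * Real.Gamma r := Real.Gamma_add_one hr.ne'
  have hΓr : (0:ℝ) < Real.Gamma r := Real.Gamma_pos_of_pos hr
  have main : Tendsto (fun t : ℝ => t ^ r * (μ (Set.Icc 0 t⁻¹)).toReal)
      (nhdsWithin 0 (Set.Ioi 0)) (nhds T) := by
    rw [Metric.tendsto_nhds]
    intro ε hε
    -- limits of the δ-dependent bounds
    have hbnd : ∀ s : ℝ → ℝ, Continuous s → s 0 = a →
        Tendsto (fun δ : ℝ => (C / Real.Gamma (r+1)) * (-Real.log (s δ))^r) (nhds 0)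
          (nhds T) := by
      intro s hs hs0
      have h0 : ContinuousAt Real.log (s 0) := by
        rw [hs0]; exact Real.continuousAt_log ha0.ne'
      have h1 : ContinuousAt (fun δ : ℝ => -Real.log (s δ)) 0 :=
        (h0.comp hs.continuousAt).neg
      have h2 : ContinuousAt (fun z : ℝ => z ^ r) (-Real.log (s 0)) := by
        rw [hs0, hloga]
        exact Real.continuousAt_rpow_const _ _ (Or.inl (by norm_num))
      have h3 : ContinuousAt (fun δ : ℝ => (-Real.log (s δ)) ^ r) 0 :=
        ContinuousAt.comp (g := fun z : ℝ => z ^ r)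
          (f := fun δ : ℝ => -Real.log (s δ)) h2 h1
      have h4 : ContinuousAt (fun δ : ℝ => (C / Real.Gamma (r+1)) * (-Real.log (s δ))^r) 0 :=
        ContinuousAt.mul (continuousAt_const : ContinuousAt (fun _ : ℝ => C / Real.Gamma (r+1)) 0) h3
      simpa [hs0, hloga] using h4.tendsto
    have e1 : ∀ᶠ δ : ℝ in nhdsWithin 0 (Set.Ioi 0), δ < a :=
      (eventually_lt_nhds ha0).filter_mono nhdsWithin_le_nhds
    have e2 : ∀ᶠ δ : ℝ in nhdsWithin 0 (Set.Ioi 0), a + δ < 1 := by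
      have := (eventually_lt_nhds (by linarith : (0:ℝ) < 1 - a)).filter_mono
        (nhdsWithin_le_nhds (s := Set.Ioi (0:ℝ)))
      filter_upwards [this] with δ hδ; linarith
    have e3 : ∀ᶠ δ : ℝ in nhdsWithin 0 (Set.Ioi 0),
        (C / Real.Gamma (r+1)) * (-Real.log (a - δ))^r < T + ε/2 :=
      (((hbnd (fun δ => a - δ) (by fun_prop) (by simp)).mono_left
        nhdsWithin_le_nhds).eventually_lt_const (by linarith))
    have e4 : ∀ᶠ δ : ℝ in nhdsWithin 0 (Set.Ioi 0),
        T - ε/2 < (C / Real.Gamma (r+1)) * (-Real.log (a + δ))^r :=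
      (((hbnd (fun δ => a + δ) (by fun_prop) (by simp)).mono_left
        nhdsWithin_le_nhds).eventually_const_lt (by linarith))
    obtain ⟨δ, ⟨⟨hδa, hδ1⟩, hδ3, hδ4⟩, hδ0⟩ :=
      (((e1.and e2).and (e3.and e4)).and self_mem_nhdsWithin).exists
    have hδ0 : (0:ℝ) < δ := hδ0
    have hb0 : (0:ℝ) < a - δ := by linarith
    have hb1 : a - δ < 1 := by linarith
    -- the two continuous test functions
    have hup := KT_tendsto_cont μ hsupp hint hr hC hlim
      (h := fun u => KTramp (a-δ) δ u / max u (a-δ)) (KT_hcont hb0)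
    have hlow := KT_tendsto_cont μ hsupp hint hr hC hlim
      (h := fun u => KTramp a δ u / max u a) (KT_hcont ha0)
    have hCr : (0:ℝ) ≤ C / Real.Gamma r := div_nonneg hC hΓr.le
    have hconv : ∀ Y : ℝ, C / Real.Gamma r * (Y^r / r) = C / Real.Gamma (r+1) * Y^r := by
      intro Y
      rw [hΓ, div_eq_mul_inv, div_eq_mul_inv, div_eq_mul_inv, mul_inv]
      ring
    have hub : (C / Real.Gamma r) *
        (∫ y in Set.Ioi 0, y^(r-1) * (Real.exp (-y) *
          (KTramp (a-δ) δ (Real.exp (-y)) / max (Real.exp (-y)) (a-δ)))) < T + ε/2 := by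
      calc (C / Real.Gamma r) * _ ≤ (C / Real.Gamma r) * ((-Real.log (a-δ))^r / r) :=
            mul_le_mul_of_nonneg_left (KT_gamma_upper hr hb0 hb1 hδ0) hCr
        _ = (C / Real.Gamma (r+1)) * (-Real.log (a-δ))^r := hconv _
        _ < T + ε/2 := hδ3
    have hlb : T - ε/2 < (C / Real.Gamma r) *
        (∫ y in Set.Ioi 0, y^(r-1) * (Real.exp (-y) *
          (KTramp a δ (Real.exp (-y)) / max (Real.exp (-y)) a))) := by
      calc T - ε/2 < (C / Real.Gamma (r+1)) * (-Real.log (a+δ))^r := hδ4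
        _ = (C / Real.Gamma r) * ((-Real.log (a+δ))^r / r) := (hconv _).symm
        _ ≤ _ := mul_le_mul_of_nonneg_left (KT_gamma_lower hr ha0 hδ0 hδ1) hCr
    have e5 := hup.eventually_lt_const hub
    have e6 := hlow.eventually_const_lt hlb
    filter_upwards [self_mem_nhdsWithin, e5, e6] with t ht h5 h6
    have ht0 : (0:ℝ) < t := ht
    have htr : (0:ℝ) ≤ t ^ r := Real.rpow_nonneg ht0.le r
    -- sandwich
    have hind : (μ (Set.Icc 0 t⁻¹)).toReal
        = ∫ x, (Set.Icc (0:ℝ) t⁻¹).indicator 1 x ∂μ :=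
      (integral_indicator_one measurableSet_Icc).symm
    have hindint : Integrable ((Set.Icc (0:ℝ) t⁻¹).indicator (1 : ℝ → ℝ)) μ := by
      rw [integrable_indicator_iff (f := (1 : ℝ → ℝ)) measurableSet_Icc]
      exact integrableOn_const (C := (1:ℝ)) (KT_finite μ hint _).ne
    have hexp : ∀ x : ℝ, 0 ≤ x → (Real.exp (-(t*x)) ≤ 1 ∧ 0 < Real.exp (-(t*x))) :=
      fun x hx => ⟨Real.exp_le_one_iff.2 (by nlinarith), Real.exp_pos _⟩
    have hsand1 : (∫ x, Real.exp (-(t*x)) *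
        (KTramp a δ (Real.exp (-(t*x))) / max (Real.exp (-(t*x))) a) ∂μ)
        ≤ ∫ x, (Set.Icc (0:ℝ) t⁻¹).indicator 1 x ∂μ := by
      refine integral_mono_ae (KT_integrable_comp μ hsupp hint (KT_hcont ha0)
        (KT_hbound ha0) ht0) hindint ?_
      filter_upwards [KT_ae_nonneg hsupp] with x hx
      rw [KT_div_max hδ0 (Real.exp_pos _)]
      rcases le_or_gt x t⁻¹ with h|h
      · rw [Set.indicator_of_mem (Set.mem_Icc.2 ⟨hx, h⟩)]
        exact KTramp_le_one _ _ _
      · rw [Set.indicator_of_notMem (fun hmem => absurd (Set.mem_Icc.1 hmem).2 (not_le.2 h))]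
        have h1 : (1:ℝ) < t * x := by
          calc (1:ℝ) = t * t⁻¹ := (mul_inv_cancel₀ ht0.ne').symm
            _ < t * x := by exact mul_lt_mul_of_pos_left h ht0
        have he : Real.exp (-(t*x)) ≤ a := Real.exp_le_exp.2 (by linarith)
        rw [KTramp_eq_zero hδ0 he]
    have hsand2 : (∫ x, (Set.Icc (0:ℝ) t⁻¹).indicator 1 x ∂μ)
        ≤ ∫ x, Real.exp (-(t*x)) *
          (KTramp (a-δ) δ (Real.exp (-(t*x))) / max (Real.exp (-(t*x))) (a-δ)) ∂μ := by
      refine integral_mono_ae hindint (KT_integrable_comp μ hsupp hint (KT_hcont hb0)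
        (KT_hbound hb0) ht0) ?_
      filter_upwards [KT_ae_nonneg hsupp] with x hx
      rw [KT_div_max hδ0 (Real.exp_pos _)]
      rcases le_or_gt x t⁻¹ with h|h
      · rw [Set.indicator_of_mem (Set.mem_Icc.2 ⟨hx, h⟩)]
        have h1 : t * x ≤ 1 := by
          calc t * x ≤ t * t⁻¹ := mul_le_mul_of_nonneg_left h ht0.le
            _ = 1 := mul_inv_cancel₀ ht0.ne'
        have he : a ≤ Real.exp (-(t*x)) := Real.exp_le_exp.2 (by linarith)
        rw [KTramp_eq_one hδ0 (by linarith)]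
        rfl
      · rw [Set.indicator_of_notMem (fun hmem => absurd (Set.mem_Icc.1 hmem).2 (not_le.2 h))]
        exact le_trans (le_refl _) (KTramp_nonneg _ _ _)
    rw [Real.dist_eq, abs_lt]
    have hs1 := mul_le_mul_of_nonneg_left hsand1 htr
    have hs2 := mul_le_mul_of_nonneg_left hsand2 htr
    rw [← hind] at hs1 hs2
    constructor <;> linarith
  -- convert to atTop
  have hcomp := main.comp tendsto_inv_atTop_nhdsGT_zero
  refine hcomp.congr' ?_
  filter_upwards [eventually_gt_atTop (0:ℝ)] with x hx
  show (x⁻¹) ^ r * (μ (Set.Icc 0 x⁻¹⁻¹)).toReal = (μ (Set.Icc 0 x)).toReal / x ^ r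
  rw [inv_inv, Real.inv_rpow hx.le, div_eq_mul_inv, mul_comm]
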